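/- Let H be a hypergraph with an Euler family F and incidence graph G, let G_F be the subgraph of G corresponding to F, and let C be an F-interchanging cycle in G. If the v-vertices of C lie in pairwise distinct connected components G1, …, Gk of G_F, at least two of which are nontrivial, and none of these v-vertices is a cut vertex of G_F, then C is an F-diminishing cycle. -/

import Mathlib

open scoped Classical

/-- A hypergraph: a finite nonempty vertex type `V`, a finite index type `E` of
edges (so that repeated edges are allowed, as in a multiset of edges), and a map
`mem` assigning to each edge the finite set of its vertices. -/
structure EHypergraph where
  V : Type
  E : Type
  [fintypeV : Fintype V]
  [fintypeE : Fintype E]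
  [nonemptyV : Nonempty V]
  mem : E → Finset V

attribute [instance] EHypergraph.fintypeV EHypergraph.fintypeE EHypergraph.nonemptyV

namespace EHypergraph

/-- A walk `v₀ e₁ v₁ e₂ … e_k v_k` in a hypergraph: consecutive anchors are
distinct and both lie in the connecting edge. -/
structure Walk (H : EHypergraph) where
  k : ℕ
  vtx : Fin (k + 1) → H.V
  edge : Fin k → H.E
  mem_left : ∀ i : Fin k, vtx i.castSucc ∈ H.mem (edge i)
  mem_right : ∀ i : Fin k, vtx i.succ ∈ H.mem (edge i)
  ne : ∀ i : Fin k, vtx i.castSucc ≠ vtx i.succ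

/-- A trail is a walk with pairwise distinct edges. -/
def Walk.IsTrail {H : EHypergraph} (W : H.Walk) : Prop :=
  Function.Injective W.edge

/-- A closed walk: `v₀ = v_k` and `k ≥ 2`. -/
def Walk.IsClosed {H : EHypergraph} (W : H.Walk) : Prop :=
  W.vtx 0 = W.vtx (Fin.last W.k) ∧ 2 ≤ W.k

def Walk.IsClosedTrail {H : EHypergraph} (W : H.Walk) : Prop :=
  W.IsTrail ∧ W.IsClosed

/-- The anchors of a walk. -/
def Walk.anchors {H : EHypergraph} (W : H.Walk) : Set H.V := Set.range W.vtx

/-- The set of edges traversed by a walk. -/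
def Walk.edgeSet {H : EHypergraph} (W : H.Walk) : Set H.E := Set.range W.edge

/-- An Euler tour: a closed trail traversing every edge exactly once. -/
def IsEulerTour (H : EHypergraph) (W : H.Walk) : Prop :=
  W.IsClosedTrail ∧ Function.Bijective W.edge

def HasEulerTour (H : EHypergraph) : Prop := ∃ W : H.Walk, H.IsEulerTour W

/-- A hypergraph is eulerian if it has no edges or admits an Euler tour. -/
def IsEulerian (H : EHypergraph) : Prop := IsEmpty H.E ∨ H.HasEulerTour

/-- An Euler family: a set of pairwise anchor-disjoint, edge-disjoint closed
trails jointly traversing every edge exactly once. -/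
def IsEulerFamily (H : EHypergraph) (F : Set H.Walk) : Prop :=
  (∀ W ∈ F, W.IsClosedTrail) ∧
  (∀ W ∈ F, ∀ W' ∈ F, W ≠ W' →
    Disjoint W.anchors W'.anchors ∧ Disjoint W.edgeSet W'.edgeSet) ∧
  (∀ e : H.E, ∃ W ∈ F, e ∈ W.edgeSet)

/-- A hypergraph is quasi-eulerian if it has no edges or admits an Euler family. -/
def IsQuasiEulerian (H : EHypergraph) : Prop :=
  IsEmpty H.E ∨ ∃ F : Set H.Walk, H.IsEulerFamily F

/-- A minimum Euler family: one with the fewest components. -/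
def IsMinEulerFamily (H : EHypergraph) (F : Set H.Walk) : Prop :=
  H.IsEulerFamily F ∧ ∀ F' : Set H.Walk, H.IsEulerFamily F' → F.ncard ≤ F'.ncard

/-- `H` is `k`-uniform if each edge has exactly `k` vertices. -/
def IsUniform (H : EHypergraph) (k : ℕ) : Prop := ∀ e : H.E, (H.mem e).card = k

/-- A covering `k`-hypergraph (`k ≥ 3`): a nonempty `k`-uniform hypergraph in
which every `(k-1)`-subset of the vertex set lies in at least one edge. -/
def IsCovering (H : EHypergraph) (k : ℕ) : Prop :=
  3 ≤ k ∧ Nonempty H.E ∧ H.IsUniform k ∧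
    ∀ S : Finset H.V, S.card = k - 1 → ∃ e : H.E, S ⊆ H.mem e

/-- The incidence graph of a hypergraph: the bipartite simple graph on
`V ⊕ E` joining `v` and `e` exactly when `v ∈ e`. -/
def incidenceGraph (H : EHypergraph) : SimpleGraph (H.V ⊕ H.E) where
  Adj x y :=
    (∃ v e, x = Sum.inl v ∧ y = Sum.inr e ∧ v ∈ H.mem e) ∨
    (∃ v e, x = Sum.inr e ∧ y = Sum.inl v ∧ v ∈ H.mem e)
  symm := by
    constructor
    rintro x y (⟨v, e, rfl, rfl, h⟩ | ⟨v, e, rfl, rfl, h⟩)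
    · exact Or.inr ⟨v, e, rfl, rfl, h⟩
    · exact Or.inl ⟨v, e, rfl, rfl, h⟩
  loopless := by
    constructor
    rintro x (⟨v, e, rfl, h, -⟩ | ⟨v, e, rfl, h, -⟩) <;> exact absurd h (by simp)

/-- `v` and `e` appear consecutively in some trail of the family `F`. -/
def ConsecIn (H : EHypergraph) (F : Set H.Walk) (v : H.V) (e : H.E) : Prop :=
  ∃ W ∈ F, ∃ i : Fin W.k, W.edge i = e ∧ (W.vtx i.castSucc = v ∨ W.vtx i.succ = v)

/-- The spanning subgraph of the incidence graph corresponding to an Euler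
family `F`: its edges are the incident pairs `ve` consecutive in some trail of `F`. -/
def eulerSubgraph (H : EHypergraph) (F : Set H.Walk) : SimpleGraph (H.V ⊕ H.E) where
  Adj x y :=
    (∃ v e, x = Sum.inl v ∧ y = Sum.inr e ∧ H.ConsecIn F v e) ∨
    (∃ v e, x = Sum.inr e ∧ y = Sum.inl v ∧ H.ConsecIn F v e)
  symm := by
    constructor
    rintro x y (⟨v, e, rfl, rfl, h⟩ | ⟨v, e, rfl, rfl, h⟩)
    · exact Or.inr ⟨v, e, rfl, rfl, h⟩
    · exact Or.inl ⟨v, e, rfl, rfl, h⟩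
  loopless := by
    constructor
    rintro x (⟨v, e, rfl, h, -⟩ | ⟨v, e, rfl, h, -⟩) <;> exact absurd h (by simp)

end EHypergraph

/-- The degree of a vertex of a simple graph (number of neighbours). -/
noncomputable def sdeg {α : Type*} (G : SimpleGraph α) (x : α) : ℕ :=
  (G.neighborSet x).ncard

/-- A connected component of a simple graph is nontrivial if it contains an edge. -/
def NontrivComp {α : Type*} (G : SimpleGraph α) (c : G.ConnectedComponent) : Prop :=
  ∃ x y, G.Adj x y ∧ G.connectedComponentMk x = c

/-- The number of nontrivial connected components of a simple graph. -/
noncomputable def ntComps {α : Type*} (G : SimpleGraph α) : ℕ :=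
  {c : G.ConnectedComponent | NontrivComp G c}.ncard

/-- A cut vertex of a simple graph: a vertex whose deletion increases the number
of connected components, i.e. some two vertices distinct from it are joined by a
walk but by no walk avoiding it. -/
def IsCutVtx {α : Type*} (G : SimpleGraph α) (v : α) : Prop :=
  ∃ x y, x ≠ v ∧ y ≠ v ∧ G.Reachable x y ∧ ¬ ∃ p : G.Walk x y, v ∉ p.support

/-- An `F`-interchanging cycle: a cycle of the incidence graph such that every
e-vertex on it is incident in `G_F` with exactly one edge of the cycle. -/
def IsInterchanging (H : EHypergraph) (F : Set H.Walk) {x : H.V ⊕ H.E}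
    (C : (H.incidenceGraph).Walk x x) : Prop :=
  C.IsCycle ∧ ∀ e : H.E, (Sum.inr e : H.V ⊕ H.E) ∈ C.support →
    ∃! s : Sym2 (H.V ⊕ H.E),
      s ∈ C.edges ∧ (Sum.inr e : H.V ⊕ H.E) ∈ s ∧ s ∈ (H.eulerSubgraph F).edgeSet

/-- The symmetric difference of a simple graph with a set of potential edges. -/
def symmDiffEdges {α : Type*} (G : SimpleGraph α) (s : Set (Sym2 α)) : SimpleGraph α :=
  SimpleGraph.fromEdgeSet (symmDiff G.edgeSet s)

/-- An `F`-diminishing cycle: an `F`-interchanging cycle `C` such that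
`G_F Δ C` has fewer nontrivial connected components than `G_F`. -/
def IsDiminishing (H : EHypergraph) (F : Set H.Walk) {x : H.V ⊕ H.E}
    (C : (H.incidenceGraph).Walk x x) : Prop :=
  IsInterchanging H F C ∧
    ntComps (symmDiffEdges (H.eulerSubgraph F) {s | s ∈ C.edges}) <
      ntComps (H.eulerSubgraph F)


/-! ### Auxiliary lemmas for the proof -/

section Aux

open SimpleGraph Sum

variable {V' : Type*} {G : SimpleGraph V'}

lemma mem_support_of_mem_edges' {a v w : V'} (p : G.Walk v w) {s : Sym2 V'}
    (hs : s ∈ p.edges) (ha : a ∈ s) : a ∈ p.support := by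
  induction s using Sym2.inductionOn with
  | hf x y =>
    rcases Sym2.mem_iff.mp ha with rfl | rfl
    · exact p.fst_mem_support_of_mem_edges hs
    · exact p.snd_mem_support_of_mem_edges hs

/-- In a walk, an edge containing a vertex that appears only at the start
must be the first edge. -/
lemma first_edge_of_not_mem_tail {b w a : V'} (r : G.Walk b w)
    (h : a ∉ r.support.tail) {s : Sym2 V'} (hs : s ∈ r.edges) (ha : a ∈ s) :
    a = b ∧ s = s(b, r.getVert 1) := by
  cases r with
  | nil => simp at hs
  | @cons _ u _ h' r' =>
    rw [SimpleGraph.Walk.support_cons] at h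
    simp only [List.tail_cons] at h
    rw [SimpleGraph.Walk.edges_cons] at hs
    rcases List.mem_cons.mp hs with rfl | hs'
    · rcases Sym2.mem_iff.mp ha with rfl | rfl
      · exact ⟨rfl, by simp⟩
      · exact absurd (SimpleGraph.Walk.start_mem_support r') h
    · exact absurd (mem_support_of_mem_edges' r' hs' ha) h

/-- Each vertex of a cycle is incident with exactly two edges of the cycle. -/
lemma cycle_two_incident {x a : V'} (C : G.Walk x x) (hC : C.IsCycle) (ha : a ∈ C.support) :
    ∃ b c : V', b ≠ c ∧ s(a, b) ∈ C.edges ∧ s(a, c) ∈ C.edges ∧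
      ∀ d, s(a, d) ∈ C.edges → d = b ∨ d = c := by
  classical
  set C' := C.rotate a ha with hC'def
  have hmem : ∀ s : Sym2 V', s ∈ C'.edges ↔ s ∈ C.edges :=
    fun s => (C.rotate_edges a ha).perm.mem_iff
  have hC' : C'.IsCycle := hC.rotate ha
  suffices h : ∃ b c : V', b ≠ c ∧ s(a, b) ∈ C'.edges ∧ s(a, c) ∈ C'.edges ∧
      ∀ d, s(a, d) ∈ C'.edges → d = b ∨ d = c by
    obtain ⟨b, c, h1, h2, h3, h4⟩ := h
    exact ⟨b, c, h1, (hmem _).mp h2, (hmem _).mp h3, fun d hd => h4 d ((hmem _).mpr hd)⟩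
  clear_value C'
  clear hmem hC'def ha
  cases C' with
  | nil => exact absurd rfl hC'.ne_nil
  | @cons _ u _ h₁ q =>
    have hnodup : q.support.Nodup := by
      have := hC'.support_nodup
      rwa [SimpleGraph.Walk.support_cons, List.tail_cons] at this
    have hqnil : ¬ q.Nil := by
      intro hn
      have : u = a := hn.eq
      subst this
      exact G.irrefl h₁
    have hlast : q.support.getLast (by simp) = a := SimpleGraph.Walk.getLast_support q
    have hadrop : a ∉ q.support.dropLast := by
      intro hmem
      have hsplit := List.dropLast_append_getLast (l := q.support) (by simp)
      rw [hlast] at hsplit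
      have := hsplit ▸ hnodup
      rw [List.nodup_append] at this
      exact this.2.2 _ hmem a (by simp) rfl
    have hrnil : ¬ q.reverse.Nil := SimpleGraph.Walk.not_nil_of_ne h₁.ne
    obtain ⟨c, h₂, r₂, hre⟩ := SimpleGraph.Walk.not_nil_iff.mp hrnil
    have hatail : a ∉ q.reverse.support.tail := by
      rw [SimpleGraph.Walk.support_reverse]
      intro hmem
      apply hadrop
      have : q.support.reverse = a :: q.support.dropLast.reverse := by
        conv_lhs => rw [← List.dropLast_append_getLast (l := q.support) (by simp), hlast]
        simp
      rw [this, List.tail_cons, List.mem_reverse] at hmem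
      exact hmem
    have hedge_rev : ∀ s : Sym2 V', s ∈ q.edges → a ∈ s → s = s(a, q.reverse.getVert 1) := by
      intro s hs hin
      have hs' : s ∈ q.reverse.edges := by
        rw [SimpleGraph.Walk.edges_reverse, List.mem_reverse]; exact hs
      exact (first_edge_of_not_mem_tail q.reverse hatail hs' hin).2
    obtain ⟨c', hc'⟩ : ∃ c', c' = q.reverse.getVert 1 := ⟨_, rfl⟩
    have hcedge : s(a, c') ∈ q.edges := by
      have : s(a, c') ∈ q.reverse.edges := by
        rw [hre]
        have : (SimpleGraph.Walk.cons h₂ r₂).getVert 1 = c := by simp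
        rw [hc', hre, this]
        simp
      rwa [SimpleGraph.Walk.edges_reverse, List.mem_reverse] at this
    have hcadj : G.Adj a c' := q.adj_of_mem_edges hcedge
    have hnodupE : (SimpleGraph.Walk.cons h₁ q).edges.Nodup :=
      hC'.edges_nodup
    rw [SimpleGraph.Walk.edges_cons, List.nodup_cons] at hnodupE
    refine ⟨u, c', ?_, by simp, ?_, ?_⟩
    · rintro rfl
      exact hnodupE.1 hcedge
    · rw [SimpleGraph.Walk.edges_cons]
      exact List.mem_cons_of_mem _ hcedge
    · intro d hd
      rw [SimpleGraph.Walk.edges_cons] at hd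
      rcases List.mem_cons.mp hd with heq | hq
      · left
        rcases Sym2.eq_iff.mp heq with ⟨-, rfl⟩ | ⟨rfl, rfl⟩
        · rfl
        · exact absurd h₁ (G.irrefl)
      · right
        have := hedge_rev _ hq (by simp)
        rw [← hc'] at this
        rcases Sym2.eq_iff.mp this with ⟨-, rfl⟩ | ⟨heq, rfl⟩
        · rfl
        · rw [← heq] at hcadj
          exact absurd hcadj G.irrefl

variable {H : EHypergraph} {F : Set H.Walk}

lemma euler_adj_iff {v : H.V} {e : H.E} :
    (H.eulerSubgraph F).Adj (inl v) (inr e) ↔ H.ConsecIn F v e := by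
  constructor
  · rintro (⟨v', e', hv, he, h⟩ | ⟨v', e', hv, he, h⟩)
    · obtain rfl : v = v' := by injection hv
      obtain rfl : e = e' := by injection he
      exact h
    · exact absurd hv (by simp)
  · intro h
    exact Or.inl ⟨v, e, rfl, rfl, h⟩

lemma euler_adj_shape {x y : H.V ⊕ H.E} (h : (H.eulerSubgraph F).Adj x y) :
    (∃ v e, x = inl v ∧ y = inr e) ∨ (∃ v e, x = inr e ∧ y = inl v) := by
  rcases h with ⟨v, e, hx, hy, -⟩ | ⟨v, e, hx, hy, -⟩
  · exact Or.inl ⟨v, e, hx, hy⟩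
  · exact Or.inr ⟨v, e, hx, hy⟩

lemma inc_adj_shape {x y : H.V ⊕ H.E} (h : (H.incidenceGraph).Adj x y) :
    (∃ v e, x = inl v ∧ y = inr e) ∨ (∃ v e, x = inr e ∧ y = inl v) := by
  rcases h with ⟨v, e, hx, hy, -⟩ | ⟨v, e, hx, hy, -⟩
  · exact Or.inl ⟨v, e, hx, hy⟩
  · exact Or.inr ⟨v, e, hx, hy⟩

/-- Each edge of the hypergraph is consecutive with exactly two anchors. -/
lemma exists_consec_pair (hF : H.IsEulerFamily F) (e : H.E) :
    ∃ a b : H.V, a ≠ b ∧ H.ConsecIn F a e ∧ H.ConsecIn F b e ∧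
      ∀ u, H.ConsecIn F u e → u = a ∨ u = b := by
  obtain ⟨W, hW, i, hi⟩ := hF.2.2 e
  refine ⟨W.vtx i.castSucc, W.vtx i.succ, W.ne i,
    ⟨W, hW, i, hi, Or.inl rfl⟩, ⟨W, hW, i, hi, Or.inr rfl⟩, ?_⟩
  rintro u ⟨W', hW', i', hi', hu⟩
  have hWW : W' = W := by
    by_contra hne
    have hdisj := (hF.2.1 W' hW' W hW hne).2
    exact Set.disjoint_left.mp hdisj ⟨i', hi'⟩ ⟨i, hi⟩
  subst hWW
  have hii : i' = i := (hF.1 W' hW').1 (hi'.trans hi.symm)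
  subst hii
  rcases hu with rfl | rfl
  · exact Or.inl rfl
  · exact Or.inr rfl

/-- Every anchor incident with an edge is incident with a second edge. -/
lemma exists_second_edge (hF : H.IsEulerFamily F) {v : H.V} {e : H.E}
    (h : H.ConsecIn F v e) : ∃ f : H.E, f ≠ e ∧ H.ConsecIn F v f := by
  obtain ⟨W, hW, i, hi, hv⟩ := h
  have htrail : Function.Injective W.edge := (hF.1 W hW).1
  obtain ⟨h0, hk2⟩ := (hF.1 W hW).2
  rcases hv with hv | hv
  · by_cases hi0 : (i : ℕ) = 0
    · refine ⟨W.edge ⟨W.k - 1, by omega⟩, ?_, W, hW, ⟨W.k - 1, by omega⟩, rfl, Or.inr ?_⟩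
      · intro heq
        rw [← hi] at heq
        have := htrail heq
        have h1 : (⟨W.k - 1, by omega⟩ : Fin W.k).val = i.val := congrArg Fin.val this
        simp at h1
        omega
      · have h1 : (⟨W.k - 1, by omega⟩ : Fin W.k).succ = Fin.last W.k := by
          ext; simp; omega
        have h2 : i.castSucc = (0 : Fin (W.k + 1)) := by
          ext; simp [hi0]
        rw [h1, ← h0, ← hv, h2]
    · refine ⟨W.edge ⟨i.val - 1, by omega⟩, ?_, W, hW, ⟨i.val - 1, by omega⟩, rfl, Or.inr ?_⟩
      · intro heq
        rw [← hi] at heq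
        have := htrail heq
        have h1 : (⟨i.val - 1, by omega⟩ : Fin W.k).val = i.val := congrArg Fin.val this
        simp at h1
        omega
      · have h1 : (⟨i.val - 1, by omega⟩ : Fin W.k).succ = i.castSucc := by
          ext; simp; omega
        rw [h1, ← hv]
  · by_cases hik : (i : ℕ) = W.k - 1
    · refine ⟨W.edge ⟨0, by omega⟩, ?_, W, hW, ⟨0, by omega⟩, rfl, Or.inl ?_⟩
      · intro heq
        rw [← hi] at heq
        have := htrail heq
        have h1 : (⟨0, by omega⟩ : Fin W.k).val = i.val := congrArg Fin.val this
        simp at h1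
        omega
      · have h1 : (⟨0, by omega⟩ : Fin W.k).castSucc = (0 : Fin (W.k + 1)) := by
          ext; simp
        have h2 : i.succ = Fin.last W.k := by
          ext; simp; omega
        rw [h1, h0, ← hv, h2]
    · have hlt : i.val + 1 < W.k := by
        have := i.isLt
        omega
      refine ⟨W.edge ⟨i.val + 1, hlt⟩, ?_, W, hW, ⟨i.val + 1, hlt⟩, rfl, Or.inl ?_⟩
      · intro heq
        rw [← hi] at heq
        have := htrail heq
        have h1 : (⟨i.val + 1, hlt⟩ : Fin W.k).val = i.val := congrArg Fin.val this
        simp at h1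
      · have h1 : (⟨i.val + 1, hlt⟩ : Fin W.k).castSucc = i.succ := by
          ext; simp
        rw [h1, ← hv]

end Aux

/-- Corollary 4.9(1): if the v-vertices of an `F`-interchanging cycle `C` lie in
pairwise distinct connected components of `G_F`, at least two of which are
nontrivial, and none of these v-vertices is a cut vertex of `G_F`, then `C` is
an `F`-diminishing cycle. -/
theorem interchanging_vvertices_diminishing (H : EHypergraph) (F : Set H.Walk)
    (hF : H.IsEulerFamily F) {x : H.V ⊕ H.E} (C : (H.incidenceGraph).Walk x x)
    (hC : IsInterchanging H F C)
    (hdist : ∀ v w : H.V, (Sum.inl v : H.V ⊕ H.E) ∈ C.support →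
      (Sum.inl w : H.V ⊕ H.E) ∈ C.support →
      (H.eulerSubgraph F).Reachable (Sum.inl v) (Sum.inl w) → v = w)
    (htwo : ∃ v w : H.V, (Sum.inl v : H.V ⊕ H.E) ∈ C.support ∧
      (Sum.inl w : H.V ⊕ H.E) ∈ C.support ∧ v ≠ w ∧
      NontrivComp (H.eulerSubgraph F)
        ((H.eulerSubgraph F).connectedComponentMk (Sum.inl v)) ∧
      NontrivComp (H.eulerSubgraph F)
        ((H.eulerSubgraph F).connectedComponentMk (Sum.inl w)))
    (hcut : ∀ v : H.V, (Sum.inl v : H.V ⊕ H.E) ∈ C.support →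
      ¬ IsCutVtx (H.eulerSubgraph F) (Sum.inl v)) :
    IsDiminishing H F C := by
  classical
  refine ⟨hC, ?_⟩
  obtain ⟨hCc, huniq⟩ := hC
  have hpair := exists_consec_pair hF
  have hsecond : ∀ {v e}, H.ConsecIn F v e → ∃ f, f ≠ e ∧ H.ConsecIn F v f :=
    fun h => exists_second_edge hF h
  -- decomposition of cycle edges
  have hincadj : ∀ {s : Sym2 (H.V ⊕ H.E)}, s ∈ C.edges →
      ∃ v e, s = s(Sum.inl v, Sum.inr e) ∧ (Sum.inl v : H.V ⊕ H.E) ∈ C.support ∧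
        (Sum.inr e : H.V ⊕ H.E) ∈ C.support := by
    intro s hs
    induction s using Sym2.inductionOn with
    | hf p q =>
      have hadj := C.adj_of_mem_edges hs
      rcases inc_adj_shape hadj with ⟨v, e, rfl, rfl⟩ | ⟨v, e, rfl, rfl⟩
      · exact ⟨v, e, rfl, C.fst_mem_support_of_mem_edges hs, C.snd_mem_support_of_mem_edges hs⟩
      · exact ⟨v, e, Sym2.eq_swap, C.snd_mem_support_of_mem_edges hs,
          C.fst_mem_support_of_mem_edges hs⟩
  -- adjacency in the symmetric difference
  have hG1adj : ∀ a b : H.V ⊕ H.E, (symmDiffEdges (H.eulerSubgraph F) {s | s ∈ C.edges}).Adj a b ↔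
      (((H.eulerSubgraph F).Adj a b ∧ s(a, b) ∉ C.edges) ∨ (s(a, b) ∈ C.edges ∧ ¬ (H.eulerSubgraph F).Adj a b)) := by
    intro a b
    constructor
    · intro h
      rw [symmDiffEdges, SimpleGraph.fromEdgeSet_adj] at h
      rcases Set.mem_symmDiff.mp h.1 with ⟨h1, h2⟩ | ⟨h1, h2⟩
      · exact Or.inl ⟨(SimpleGraph.mem_edgeSet _).mp h1, h2⟩
      · exact Or.inr ⟨h1, fun hadj => h2 ((SimpleGraph.mem_edgeSet _).mpr hadj)⟩
    · intro h
      rw [symmDiffEdges, SimpleGraph.fromEdgeSet_adj]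
      rcases h with ⟨h1, h2⟩ | ⟨h1, h2⟩
      · exact ⟨Set.mem_symmDiff.mpr (Or.inl ⟨(SimpleGraph.mem_edgeSet _).mpr h1, h2⟩), h1.ne⟩
      · exact ⟨Set.mem_symmDiff.mpr (Or.inr ⟨h1, fun hm => h2 ((SimpleGraph.mem_edgeSet _).mp hm)⟩),
          (C.adj_of_mem_edges h1).ne⟩
  have hretain : ∀ {a b : H.V ⊕ H.E}, (H.eulerSubgraph F).Adj a b → s(a, b) ∉ C.edges → (symmDiffEdges (H.eulerSubgraph F) {s | s ∈ C.edges}).Adj a b :=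
    fun h1 h2 => (hG1adj _ _).mpr (Or.inl ⟨h1, h2⟩)
  have hadded : ∀ {a b : H.V ⊕ H.E}, s(a, b) ∈ C.edges → ¬ (H.eulerSubgraph F).Adj a b → (symmDiffEdges (H.eulerSubgraph F) {s | s ∈ C.edges}).Adj a b :=
    fun h1 h2 => (hG1adj _ _).mpr (Or.inr ⟨h1, h2⟩)
  -- B1: avoiding the unique cut-candidate vertex
  have hB1 : ∀ w : H.V, (Sum.inl w : H.V ⊕ H.E) ∈ C.support →
      ∀ p q : H.V ⊕ H.E, p ≠ Sum.inl w → q ≠ Sum.inl w →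
      (H.eulerSubgraph F).Reachable p (Sum.inl w) → (H.eulerSubgraph F).Reachable q (Sum.inl w) →
      (symmDiffEdges (H.eulerSubgraph F) {s | s ∈ C.edges}).Reachable p q := by
    intro w hw p q hp hq hrp hrq
    by_cases hpq : p = q
    · subst hpq; exact SimpleGraph.Reachable.refl _
    have hnc := hcut w hw
    rw [IsCutVtx] at hnc
    push_neg at hnc
    obtain ⟨pw, hpw⟩ := hnc p q hp hq (hrp.trans hrq.symm)
    refine ⟨pw.transfer (symmDiffEdges (H.eulerSubgraph F) {s | s ∈ C.edges}) ?_⟩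
    intro s hs
    induction s using Sym2.inductionOn with
    | hf a b =>
      have hadj : (H.eulerSubgraph F).Adj a b := pw.adj_of_mem_edges hs
      have hnotC : s(a, b) ∉ C.edges := by
        intro hCe
        obtain ⟨v', e', heq, hv', he'⟩ := hincadj hCe
        have hmem : (Sum.inl v' : H.V ⊕ H.E) ∈ pw.support := by
          refine mem_support_of_mem_edges' pw hs ?_
          rw [heq]; simp
        have hrv : (H.eulerSubgraph F).Reachable p (Sum.inl v') := ⟨pw.takeUntil _ hmem⟩
        have : v' = w := hdist v' w hv' hw (hrv.symm.trans hrp)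
        subst this
        exact hpw hmem
      exact (SimpleGraph.mem_edgeSet _).mpr (hretain hadj hnotC)
  -- the second euler-neighbour of an e-vertex on the cycle avoids the cycle
  have hother : ∀ e₀ : H.E, (Sum.inr e₀ : H.V ⊕ H.E) ∈ C.support →
      ∀ v₀ : H.V, (H.eulerSubgraph F).Adj (Sum.inl v₀) (Sum.inr e₀) →
      s((Sum.inl v₀ : H.V ⊕ H.E), Sum.inr e₀) ∈ C.edges →
      ∃ u : H.V, u ≠ v₀ ∧ (H.eulerSubgraph F).Adj (Sum.inl u) (Sum.inr e₀) ∧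
        s((Sum.inl u : H.V ⊕ H.E), Sum.inr e₀) ∉ C.edges := by
    intro e₀ hsup v₀ hadj hCe
    obtain ⟨a, b, hab, ha, hb, hcov⟩ := hpair e₀
    have hgen : ∀ u : H.V, H.ConsecIn F u e₀ → u ≠ v₀ →
        ∃ u' : H.V, u' ≠ v₀ ∧ (H.eulerSubgraph F).Adj (Sum.inl u') (Sum.inr e₀) ∧
          s((Sum.inl u' : H.V ⊕ H.E), Sum.inr e₀) ∉ C.edges := by
      intro u hu hune
      refine ⟨u, hune, euler_adj_iff.mpr hu, ?_⟩
      intro hCu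
      obtain ⟨s₀, hs₀, huni⟩ := huniq e₀ hsup
      have h1 := huni s(Sum.inl v₀, Sum.inr e₀) ⟨hCe, by simp, (SimpleGraph.mem_edgeSet _).mpr hadj⟩
      have h2 := huni s(Sum.inl u, Sum.inr e₀)
        ⟨hCu, by simp, (SimpleGraph.mem_edgeSet _).mpr (euler_adj_iff.mpr hu)⟩
      have h3 : s((Sum.inl u : H.V ⊕ H.E), Sum.inr e₀) = s(Sum.inl v₀, Sum.inr e₀) :=
        h2.trans h1.symm
      rcases Sym2.eq_iff.mp h3 with ⟨h4, -⟩ | ⟨h4, h5⟩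
      · exact hune (by injection h4)
      · exact absurd h4 (by simp)
    rcases hcov v₀ (euler_adj_iff.mp hadj) with rfl | rfl
    · exact hgen b hb (Ne.symm hab)
    · exact hgen a ha hab
  -- T: two cycle edges at a common v-vertex give reachable e-vertices in G₁
  have hT : ∀ (v₁ : H.V) (e e' : H.E), s((Sum.inl v₁ : H.V ⊕ H.E), Sum.inr e) ∈ C.edges →
      s((Sum.inl v₁ : H.V ⊕ H.E), Sum.inr e') ∈ C.edges →
      (symmDiffEdges (H.eulerSubgraph F) {s | s ∈ C.edges}).Reachable (Sum.inr e) (Sum.inr e') := by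
    intro v₁ e e' he he'
    by_cases hee : e = e'
    · subst hee; exact SimpleGraph.Reachable.refl _
    have hv : (Sum.inl v₁ : H.V ⊕ H.E) ∈ C.support := C.fst_mem_support_of_mem_edges he
    have hes : (Sum.inr e : H.V ⊕ H.E) ∈ C.support := C.snd_mem_support_of_mem_edges he
    have hes' : (Sum.inr e' : H.V ⊕ H.E) ∈ C.support := C.snd_mem_support_of_mem_edges he'
    obtain ⟨b, c, hbc, hbE, hcE, hcov⟩ := cycle_two_incident C hCc hv
    have h1 := hcov _ he
    have h2 := hcov _ he'
    have hvonly : ∀ d, s((Sum.inl v₁ : H.V ⊕ H.E), d) ∈ C.edges →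
        d = Sum.inr e ∨ d = Sum.inr e' := by
      intro d hd
      have h3 := hcov _ hd
      rcases h1 with h1 | h1 <;> rcases h2 with h2 | h2 <;> rcases h3 with h3 | h3 <;>
        first
          | exact Or.inl (h3.trans h1.symm)
          | exact Or.inr (h3.trans h2.symm)
          | exact absurd (Sum.inr_injective (h1.trans h2.symm)) hee
    by_cases hein : (H.eulerSubgraph F).Adj (Sum.inl v₁) (Sum.inr e) <;>
      by_cases hein' : (H.eulerSubgraph F).Adj (Sum.inl v₁) (Sum.inr e')
    · -- both cycle edges lie in G₀
      obtain ⟨u, hune, huadj, hunotC⟩ := hother e hes v₁ hein he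
      obtain ⟨u', hune', huadj', hunotC'⟩ := hother e' hes' v₁ hein' he'
      have hA1 : (symmDiffEdges (H.eulerSubgraph F) {s | s ∈ C.edges}).Adj (Sum.inr e) (Sum.inl u) :=
        hretain huadj.symm (by rw [Sym2.eq_swap]; exact hunotC)
      have hA2 : (symmDiffEdges (H.eulerSubgraph F) {s | s ∈ C.edges}).Adj (Sum.inr e') (Sum.inl u') :=
        hretain huadj'.symm (by rw [Sym2.eq_swap]; exact hunotC')
      have hA3 : (symmDiffEdges (H.eulerSubgraph F) {s | s ∈ C.edges}).Reachable (Sum.inl u) (Sum.inl u') :=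
        hB1 v₁ hv _ _ (by simp [hune]) (by simp [hune'])
          (huadj.reachable.trans hein.symm.reachable)
          (huadj'.reachable.trans hein'.symm.reachable)
      exact hA1.reachable.trans (hA3.trans hA2.reachable.symm)
    · -- e-edge in G₀, e'-edge not
      obtain ⟨u, hune, huadj, hunotC⟩ := hother e hes v₁ hein he
      obtain ⟨f, hfe, hfcon⟩ := hsecond (euler_adj_iff.mp hein)
      have hfadj : (H.eulerSubgraph F).Adj (Sum.inl v₁) (Sum.inr f) := euler_adj_iff.mpr hfcon
      have hfnotC : s((Sum.inl v₁ : H.V ⊕ H.E), Sum.inr f) ∉ C.edges := by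
        intro hCf
        rcases hvonly _ hCf with h | h
        · exact hfe (by injection h)
        · have : f = e' := by injection h
          subst this
          exact hein' hfadj
      have hA1 : (symmDiffEdges (H.eulerSubgraph F) {s | s ∈ C.edges}).Adj (Sum.inr e) (Sum.inl u) :=
        hretain huadj.symm (by rw [Sym2.eq_swap]; exact hunotC)
      have hA2 : (symmDiffEdges (H.eulerSubgraph F) {s | s ∈ C.edges}).Adj (Sum.inl v₁) (Sum.inr f) := hretain hfadj hfnotC
      have hA3 : (symmDiffEdges (H.eulerSubgraph F) {s | s ∈ C.edges}).Adj (Sum.inl v₁) (Sum.inr e') := hadded he' hein'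
      have hA4 : (symmDiffEdges (H.eulerSubgraph F) {s | s ∈ C.edges}).Reachable (Sum.inl u) (Sum.inr f) :=
        hB1 v₁ hv _ _ (by simp [hune]) (by simp)
          (huadj.reachable.trans hein.symm.reachable) hfadj.symm.reachable
      exact hA1.reachable.trans (hA4.trans (hA2.symm.reachable.trans hA3.reachable))
    · -- e'-edge in G₀, e-edge not
      obtain ⟨u, hune, huadj, hunotC⟩ := hother e' hes' v₁ hein' he'
      obtain ⟨f, hfe, hfcon⟩ := hsecond (euler_adj_iff.mp hein')
      have hfadj : (H.eulerSubgraph F).Adj (Sum.inl v₁) (Sum.inr f) := euler_adj_iff.mpr hfcon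
      have hfnotC : s((Sum.inl v₁ : H.V ⊕ H.E), Sum.inr f) ∉ C.edges := by
        intro hCf
        rcases hvonly _ hCf with h | h
        · have : f = e := by injection h
          subst this
          exact hein hfadj
        · exact hfe (by injection h)
      have hA1 : (symmDiffEdges (H.eulerSubgraph F) {s | s ∈ C.edges}).Adj (Sum.inr e') (Sum.inl u) :=
        hretain huadj.symm (by rw [Sym2.eq_swap]; exact hunotC)
      have hA2 : (symmDiffEdges (H.eulerSubgraph F) {s | s ∈ C.edges}).Adj (Sum.inl v₁) (Sum.inr f) := hretain hfadj hfnotC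
      have hA3 : (symmDiffEdges (H.eulerSubgraph F) {s | s ∈ C.edges}).Adj (Sum.inl v₁) (Sum.inr e) := hadded he hein
      have hA4 : (symmDiffEdges (H.eulerSubgraph F) {s | s ∈ C.edges}).Reachable (Sum.inl u) (Sum.inr f) :=
        hB1 v₁ hv _ _ (by simp [hune]) (by simp)
          (huadj.reachable.trans hein'.symm.reachable) hfadj.symm.reachable
      exact (hA1.reachable.trans (hA4.trans (hA2.symm.reachable.trans hA3.reachable))).symm
    · -- neither in G₀: both added
      exact (hadded he hein).symm.reachable.trans (hadded he' hein').reachable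
  -- chain along a piece of the cycle
  have hchain : ∀ n : ℕ, ∀ (a b : H.V ⊕ H.E) (p : (H.incidenceGraph).Walk a b),
      p.length ≤ n → (∀ s ∈ p.edges, s ∈ C.edges) → ∀ e f : H.E,
      a = Sum.inr e → b = Sum.inr f → (symmDiffEdges (H.eulerSubgraph F) {s | s ∈ C.edges}).Reachable (Sum.inr e) (Sum.inr f) := by
    intro n
    induction n with
    | zero =>
      intro a b p hlen hsub e f ha hb
      cases p with
      | nil =>
        rw [ha] at hb
        obtain rfl : e = f := by injection hb
        exact SimpleGraph.Reachable.refl _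
      | cons h q => simp at hlen
    | succ n ih =>
      intro a b p hlen hsub e f ha hb
      cases p with
      | nil =>
        rw [ha] at hb
        obtain rfl : e = f := by injection hb
        exact SimpleGraph.Reachable.refl _
      | @cons _ m _ h q =>
        subst ha
        rcases inc_adj_shape h with ⟨v₁, e₁, hx, hy⟩ | ⟨v₁, e₁, hx, hy⟩
        · exact absurd hx (by simp)
        · subst hy
          cases q with
          | nil => exact absurd hb (by simp)
          | @cons _ m' _ h' q' =>
            rcases inc_adj_shape h' with ⟨v₂, e₂, hx', hy'⟩ | ⟨v₂, e₂, hx', hy'⟩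
            · subst hy'
              have hT1 : (symmDiffEdges (H.eulerSubgraph F) {s | s ∈ C.edges}).Reachable (Sum.inr e) (Sum.inr e₂) := by
                refine hT v₁ e e₂ ?_ ?_
                · have := hsub s(Sum.inr e, Sum.inl v₁) (by simp)
                  rwa [Sym2.eq_swap] at this
                · exact hsub s(Sum.inl v₁, Sum.inr e₂) (by simp)
              have hlen' : q'.length ≤ n := by
                simp only [SimpleGraph.Walk.length_cons] at hlen
                omega
              have hrest := ih (Sum.inr e₂) b q' hlen'
                (fun s hs => hsub s (by simp [hs])) e₂ f rfl hb
              exact hT1.trans hrest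
            · exact absurd hx' (by simp)
  -- all e-vertices of the cycle are G₁-reachable from one another
  have hE : ∀ e f : H.E, (Sum.inr e : H.V ⊕ H.E) ∈ C.support →
      (Sum.inr f : H.V ⊕ H.E) ∈ C.support → (symmDiffEdges (H.eulerSubgraph F) {s | s ∈ C.edges}).Reachable (Sum.inr e) (Sum.inr f) := by
    intro e f he hf
    have hsub : ∀ s ∈ ((C.takeUntil _ he).reverse.append (C.takeUntil _ hf)).edges,
        s ∈ C.edges := by
      intro s hs
      rw [SimpleGraph.Walk.edges_append, List.mem_append] at hs
      rcases hs with hs | hs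
      · rw [SimpleGraph.Walk.edges_reverse, List.mem_reverse] at hs
        exact C.edges_takeUntil_subset he hs
      · exact C.edges_takeUntil_subset hf hs
    exact hchain _ _ _ ((C.takeUntil _ he).reverse.append (C.takeUntil _ hf)) le_rfl hsub
      e f rfl rfl
  -- a distinguished e-vertex on the cycle
  obtain ⟨estar, hestar⟩ : ∃ e : H.E, (Sum.inr e : H.V ⊕ H.E) ∈ C.support := by
    have h3 := hCc.three_le_length
    have hne : C.edges ≠ [] := by
      intro h
      have := C.length_edges
      rw [h] at this
      simp at this
      omega
    obtain ⟨s, hs⟩ := List.exists_mem_of_ne_nil _ hne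
    obtain ⟨v', e', -, -, hsup⟩ := hincadj hs
    exact ⟨e', hsup⟩
  -- the region of components meeting the cycle
  set R : Set (H.V ⊕ H.E) :=
    {z | ∃ v', (Sum.inl v' : H.V ⊕ H.E) ∈ C.support ∧ (H.eulerSubgraph F).Reachable z (Sum.inl v')} with hR
  have hRcl : ∀ {z z' : H.V ⊕ H.E}, z ∈ R → (H.eulerSubgraph F).Reachable z z' → z' ∈ R := by
    rintro z z' ⟨v', h1, h2⟩ hr
    exact ⟨v', h1, hr.symm.trans h2⟩
  have hRedge : ∀ s ∈ C.edges, ∀ z ∈ s, z ∈ R := by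
    intro s hs z hz
    obtain ⟨v', e', rfl, hv', he'⟩ := hincadj hs
    have heR : (Sum.inr e' : H.V ⊕ H.E) ∈ R := by
      obtain ⟨s₀, ⟨hs₀C, hs₀mem, hs₀G⟩, -⟩ := huniq e' he'
      obtain ⟨v₀, e₀, heq, hv₀, -⟩ := hincadj hs₀C
      rw [heq] at hs₀mem
      rcases Sym2.mem_iff.mp hs₀mem with h | h
      · exact absurd h (by simp)
      · obtain rfl : e' = e₀ := by injection h
        rw [heq] at hs₀G
        have hadj0 : (H.eulerSubgraph F).Adj (Sum.inl v₀) (Sum.inr e') := (SimpleGraph.mem_edgeSet _).mp hs₀G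
        exact ⟨v₀, hv₀, hadj0.symm.reachable⟩
    rcases Sym2.mem_iff.mp hz with rfl | rfl
    · exact ⟨v', hv', SimpleGraph.Reachable.refl _⟩
    · exact heR
  have hG1out : ∀ {z z' : H.V ⊕ H.E}, z ∉ R → (symmDiffEdges (H.eulerSubgraph F) {s | s ∈ C.edges}).Adj z z' →
      (H.eulerSubgraph F).Adj z z' ∧ z' ∉ R := by
    intro z z' hz h
    rcases (hG1adj z z').mp h with ⟨h1, h2⟩ | ⟨h1, h2⟩
    · exact ⟨h1, fun hz' => hz (hRcl hz' h1.symm.reachable)⟩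
    · exact absurd (hRedge _ h1 z (by simp)) hz
  have hreachout : ∀ (z z' : H.V ⊕ H.E) (p : (symmDiffEdges (H.eulerSubgraph F) {s | s ∈ C.edges}).Walk z z'), z ∉ R →
      (H.eulerSubgraph F).Reachable z z' ∧ z' ∉ R := by
    intro z z' p
    induction p with
    | nil => exact fun hz => ⟨SimpleGraph.Reachable.refl _, hz⟩
    | cons h q ih =>
      intro hz
      obtain ⟨h0, hmR⟩ := hG1out hz h
      obtain ⟨hr, hb⟩ := ih hmR
      exact ⟨h0.reachable.trans hr, hb⟩
  have hreachout' : ∀ z z' : H.V ⊕ H.E, z ∉ R → (H.eulerSubgraph F).Reachable z z' →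
      (symmDiffEdges (H.eulerSubgraph F) {s | s ∈ C.edges}).Reachable z z' := by
    rintro z z' hz ⟨p⟩
    refine ⟨p.transfer (symmDiffEdges (H.eulerSubgraph F) {s | s ∈ C.edges}) ?_⟩
    intro s hs
    induction s using Sym2.inductionOn with
    | hf a b =>
      have hadj := p.adj_of_mem_edges hs
      have haR : a ∉ R := by
        intro h
        exact hz (hRcl h (SimpleGraph.Reachable.symm ⟨p.takeUntil _ (p.fst_mem_support_of_mem_edges hs)⟩))
      have hnotC : s(a, b) ∉ C.edges := fun h => haR (hRedge _ h a (by simp))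
      exact (SimpleGraph.mem_edgeSet _).mpr (hretain hadj hnotC)
  -- every G₁-edge touching the region is joined to the big component
  have hZ : ∀ z z' : H.V ⊕ H.E, (symmDiffEdges (H.eulerSubgraph F) {s | s ∈ C.edges}).Adj z z' → z ∈ R →
      (symmDiffEdges (H.eulerSubgraph F) {s | s ∈ C.edges}).Reachable z (Sum.inr estar) := by
    intro z z' hadj hzR
    rcases (hG1adj z z').mp hadj with ⟨h1, h2⟩ | ⟨h1, h2⟩
    · -- retained G₀-edge
      obtain ⟨w', hw'sup, hw'r⟩ := hzR
      obtain ⟨z₀, hz₀ne, hz₀r1, hz₀r0⟩ : ∃ z₀ : H.V ⊕ H.E, z₀ ≠ Sum.inl w' ∧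
          (symmDiffEdges (H.eulerSubgraph F) {s | s ∈ C.edges}).Reachable z z₀ ∧ (H.eulerSubgraph F).Reachable z₀ (Sum.inl w') := by
        by_cases hzw : z = Sum.inl w'
        · refine ⟨z', ?_, hadj.reachable, h1.symm.reachable.trans (hzw ▸ hw'r)⟩
          rw [hzw] at hadj
          exact hadj.ne'
        · exact ⟨z, hzw, SimpleGraph.Reachable.refl _, hw'r⟩
      obtain ⟨b, c, hbc, hbE, hcE, hcov⟩ := cycle_two_incident C hCc hw'sup
      obtain ⟨g₁, rfl⟩ : ∃ g₁, b = Sum.inr g₁ := by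
        obtain ⟨v₁, e₁, heq, -, -⟩ := hincadj hbE
        rcases Sym2.eq_iff.mp heq with ⟨h₁', h₂'⟩ | ⟨h₁', h₂'⟩
        · exact ⟨e₁, h₂'⟩
        · exact absurd h₁' (by simp)
      obtain ⟨g₂, rfl⟩ : ∃ g₂, c = Sum.inr g₂ := by
        obtain ⟨v₁, e₁, heq, -, -⟩ := hincadj hcE
        rcases Sym2.eq_iff.mp heq with ⟨h₁', h₂'⟩ | ⟨h₁', h₂'⟩
        · exact ⟨e₁, h₂'⟩
        · exact absurd h₁' (by simp)
      have hg₁sup : (Sum.inr g₁ : H.V ⊕ H.E) ∈ C.support := C.snd_mem_support_of_mem_edges hbE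
      have hg₂sup : (Sum.inr g₂ : H.V ⊕ H.E) ∈ C.support := C.snd_mem_support_of_mem_edges hcE
      by_cases hgadj : (H.eulerSubgraph F).Adj (Sum.inl w') (Sum.inr g₁) ∨ (H.eulerSubgraph F).Adj (Sum.inl w') (Sum.inr g₂)
      · obtain hg | hg := hgadj
        · have hreach1 : (symmDiffEdges (H.eulerSubgraph F) {s | s ∈ C.edges}).Reachable z₀ (Sum.inr g₁) :=
            hB1 w' hw'sup z₀ (Sum.inr g₁) hz₀ne (by simp) hz₀r0 hg.symm.reachable
          exact hz₀r1.trans (hreach1.trans (hE g₁ estar hg₁sup hestar))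
        · have hreach1 : (symmDiffEdges (H.eulerSubgraph F) {s | s ∈ C.edges}).Reachable z₀ (Sum.inr g₂) :=
            hB1 w' hw'sup z₀ (Sum.inr g₂) hz₀ne (by simp) hz₀r0 hg.symm.reachable
          exact hz₀r1.trans (hreach1.trans (hE g₂ estar hg₂sup hestar))
      · push_neg at hgadj
        have hadd1 : (symmDiffEdges (H.eulerSubgraph F) {s | s ∈ C.edges}).Adj (Sum.inl w') (Sum.inr g₁) := hadded hbE hgadj.1
        obtain ⟨p0⟩ := hz₀r0.symm
        have hpnil : ¬ p0.Nil := SimpleGraph.Walk.not_nil_of_ne (Ne.symm hz₀ne)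
        obtain ⟨m, hm, q0, -⟩ := SimpleGraph.Walk.not_nil_iff.mp hpnil
        have hmnotC : s((Sum.inl w' : H.V ⊕ H.E), m) ∉ C.edges := by
          intro hmC
          rcases hcov _ hmC with rfl | rfl
          · exact hgadj.1 hm
          · exact hgadj.2 hm
        have hret : (symmDiffEdges (H.eulerSubgraph F) {s | s ∈ C.edges}).Adj (Sum.inl w') m := hretain hm hmnotC
        have hr2 : (symmDiffEdges (H.eulerSubgraph F) {s | s ∈ C.edges}).Reachable z₀ m :=
          hB1 w' hw'sup z₀ m hz₀ne hm.ne' hz₀r0 hm.symm.reachable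
        exact hz₀r1.trans (hr2.trans (hret.symm.reachable.trans
          (hadd1.reachable.trans (hE g₁ estar hg₁sup hestar))))
    · -- added cycle edge
      obtain ⟨v₁, e₁, heq, hv₁, he₁⟩ := hincadj h1
      have hEr := hE e₁ estar he₁ hestar
      rcases Sym2.eq_iff.mp heq with ⟨hz1, hz2⟩ | ⟨hz1, hz2⟩
      · rw [← hz2] at hEr
        exact hadj.reachable.trans hEr
      · rw [← hz1] at hEr
        exact hEr
  -- the counting argument
  obtain ⟨v, w, hvS, hwS, hvw, hvN, hwN⟩ := htwo
  have hRv : (Sum.inl v : H.V ⊕ H.E) ∈ R := ⟨v, hvS, SimpleGraph.Reachable.refl _⟩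
  have hRw : (Sum.inl w : H.V ⊕ H.E) ∈ R := ⟨w, hwS, SimpleGraph.Reachable.refl _⟩
  have hout_spec : ∀ c : (symmDiffEdges (H.eulerSubgraph F) {s | s ∈ C.edges}).ConnectedComponent,
      (symmDiffEdges (H.eulerSubgraph F) {s | s ∈ C.edges}).connectedComponentMk (Quot.out c) = c := fun c => Quot.out_eq c
  obtain ⟨f, hfdef⟩ : ∃ f : (symmDiffEdges (H.eulerSubgraph F) {s | s ∈ C.edges}).ConnectedComponent → (H.eulerSubgraph F).ConnectedComponent,
      f = fun c => if c = (symmDiffEdges (H.eulerSubgraph F) {s | s ∈ C.edges}).connectedComponentMk (Sum.inr estar) then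
        (H.eulerSubgraph F).connectedComponentMk (Sum.inl v) else (H.eulerSubgraph F).connectedComponentMk (Quot.out c) :=
    ⟨_, rfl⟩
  have hK : ∀ c : (symmDiffEdges (H.eulerSubgraph F) {s | s ∈ C.edges}).ConnectedComponent, NontrivComp (symmDiffEdges (H.eulerSubgraph F) {s | s ∈ C.edges}) c →
      c ≠ (symmDiffEdges (H.eulerSubgraph F) {s | s ∈ C.edges}).connectedComponentMk (Sum.inr estar) →
      (Quot.out c) ∉ R ∧ NontrivComp (H.eulerSubgraph F) ((H.eulerSubgraph F).connectedComponentMk (Quot.out c)) := by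
    rintro c ⟨p, q, hpq, hmk⟩ hne
    have hpR : p ∉ R := by
      intro hpR
      exact hne (hmk ▸ (SimpleGraph.ConnectedComponent.sound (hZ p q hpq hpR)).symm ▸ rfl)
    obtain ⟨pw⟩ : (symmDiffEdges (H.eulerSubgraph F) {s | s ∈ C.edges}).Reachable p (Quot.out c) :=
      SimpleGraph.ConnectedComponent.exact (by rw [hout_spec, ← hmk])
    obtain ⟨hG0r, hoR⟩ := hreachout p _ pw hpR
    refine ⟨hoR, p, q, (hG1out hpR hpq).1, SimpleGraph.ConnectedComponent.sound hG0r⟩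
  have hmaps : ∀ c ∈ {c : (symmDiffEdges (H.eulerSubgraph F) {s | s ∈ C.edges}).ConnectedComponent | NontrivComp (symmDiffEdges (H.eulerSubgraph F) {s | s ∈ C.edges}) c},
      f c ∈ {c : (H.eulerSubgraph F).ConnectedComponent | NontrivComp (H.eulerSubgraph F) c} := by
    intro c hc
    by_cases hcB : c = (symmDiffEdges (H.eulerSubgraph F) {s | s ∈ C.edges}).connectedComponentMk (Sum.inr estar)
    · rw [hfdef]; simp only [hcB, if_pos rfl]
      exact hvN
    · rw [hfdef]; simp only [if_neg hcB]
      exact (hK c hc hcB).2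
  have hinj : Set.InjOn f {c : (symmDiffEdges (H.eulerSubgraph F) {s | s ∈ C.edges}).ConnectedComponent | NontrivComp (symmDiffEdges (H.eulerSubgraph F) {s | s ∈ C.edges}) c} := by
    intro c₁ h₁ c₂ h₂ hfeq
    rw [hfdef] at hfeq
    by_cases hB₁ : c₁ = (symmDiffEdges (H.eulerSubgraph F) {s | s ∈ C.edges}).connectedComponentMk (Sum.inr estar) <;>
      by_cases hB₂ : c₂ = (symmDiffEdges (H.eulerSubgraph F) {s | s ∈ C.edges}).connectedComponentMk (Sum.inr estar)
    · rw [hB₁, hB₂]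
    · exfalso
      simp only [if_pos hB₁, if_neg hB₂] at hfeq
      have hr := SimpleGraph.ConnectedComponent.exact hfeq
      exact (hK c₂ h₂ hB₂).1 (hRcl hRv hr)
    · exfalso
      simp only [if_neg hB₁, if_pos hB₂] at hfeq
      have hr := SimpleGraph.ConnectedComponent.exact hfeq
      exact (hK c₁ h₁ hB₁).1 (hRcl hRv hr.symm)
    · simp only [if_neg hB₁, if_neg hB₂] at hfeq
      have hr := SimpleGraph.ConnectedComponent.exact hfeq
      have hr1 := hreachout' _ _ (hK c₁ h₁ hB₁).1 hr
      rw [← hout_spec c₁, ← hout_spec c₂]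
      exact SimpleGraph.ConnectedComponent.sound hr1
  have hmiss : (H.eulerSubgraph F).connectedComponentMk (Sum.inl w) ∈
      {c : (H.eulerSubgraph F).ConnectedComponent | NontrivComp (H.eulerSubgraph F) c} \
        f '' {c : (symmDiffEdges (H.eulerSubgraph F) {s | s ∈ C.edges}).ConnectedComponent | NontrivComp (symmDiffEdges (H.eulerSubgraph F) {s | s ∈ C.edges}) c} := by
    refine ⟨hwN, ?_⟩
    rintro ⟨c, hc, hfc⟩
    rw [hfdef] at hfc
    by_cases hcB : c = (symmDiffEdges (H.eulerSubgraph F) {s | s ∈ C.edges}).connectedComponentMk (Sum.inr estar)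
    · simp only [if_pos hcB] at hfc
      have hr := SimpleGraph.ConnectedComponent.exact hfc
      exact hvw (hdist v w hvS hwS hr)
    · simp only [if_neg hcB] at hfc
      have hr := SimpleGraph.ConnectedComponent.exact hfc
      exact (hK c hc hcB).1 (hRcl hRw hr.symm)
  have hfin0 : Finite ((H.eulerSubgraph F).ConnectedComponent) :=
    Finite.of_surjective ((H.eulerSubgraph F).connectedComponentMk) (Quot.exists_rep)
  have hfin : {c : (H.eulerSubgraph F).ConnectedComponent | NontrivComp (H.eulerSubgraph F) c}.Finite := Set.toFinite _
  have hss : f '' {c : (symmDiffEdges (H.eulerSubgraph F) {s | s ∈ C.edges}).ConnectedComponent | NontrivComp (symmDiffEdges (H.eulerSubgraph F) {s | s ∈ C.edges}) c} ⊂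
      {c : (H.eulerSubgraph F).ConnectedComponent | NontrivComp (H.eulerSubgraph F) c} := by
    rw [ssubset_iff_subset_not_subset]
    constructor
    · rintro y ⟨c, hc, rfl⟩
      exact hmaps c hc
    · intro hsub
      exact hmiss.2 (hsub hmiss.1)
  have hlt := Set.ncard_lt_ncard hss hfin
  rw [Set.ncard_image_of_injOn hinj] at hlt
  exact hlt
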